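/- For t > 0 and c₁ ∈ ℝ, let A(t) = [[0, 0, t^{−1/3}, (9/20)c₁ t^{4/3}], [−(9/20)c₁ t², −t^{1/3}, 0, 0]], v(z) = (z₁, z₂, z₂(f¹)'(z₁) + f²(z₁), f¹(z₁)), and ρ = c₁z₁. Then det(dφ) for φ = Av equals −(z₂(f¹)''(z₁) + (f²)'(z₁)) up to sign and is independent of t. -/

import Mathlib

noncomputable def pd1 (f : ℝ × ℝ → ℝ) (z : ℝ × ℝ) : ℝ := fderiv ℝ f z ((1:ℝ), (0:ℝ))
noncomputable def pd2 (f : ℝ × ℝ → ℝ) (z : ℝ × ℝ) : ℝ := fderiv ℝ f z ((0:ℝ), (1:ℝ))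

/-- det(∇u, ∇w). -/
noncomputable def det2 (u w : ℝ × ℝ → ℝ) (z : ℝ × ℝ) : ℝ :=
  pd1 u z * pd2 w z - pd2 u z * pd1 w z

/-- Volume preservation for the explicit Case-3 solution (2D, m = 4):
with A = [[0,0,t^{−1/3},(9/20)c₁t^{4/3}],[−(9/20)c₁t²,−t^{1/3},0,0]],
v = (z₁,z₂,z₂(f¹)'(z₁)+f²(z₁),f¹(z₁)), the Jacobian determinant of φ = Av equals
−(z₂(f¹)''(z₁) + (f²)'(z₁)) for all t > 0, hence is independent of t. -/
theorem case3_volume_preservation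
    (c₁ : ℝ)
    (f1 f2 : ℝ → ℝ) (hf1 : ContDiff ℝ 2 f1) (hf2 : ContDiff ℝ 1 f2)
    (φ1 φ2 : ℝ × ℝ → ℝ → ℝ)
    (hφ1 : ∀ z t, φ1 z t = t ^ ((-1 : ℝ) / 3) * (z.2 * deriv f1 z.1 + f2 z.1)
        + (9 / 20) * c₁ * t ^ ((4 : ℝ) / 3) * f1 z.1)
    (hφ2 : ∀ z t, φ2 z t = -(9 / 20) * c₁ * t ^ (2 : ℕ) * z.1 - t ^ ((1 : ℝ) / 3) * z.2)
    (ρ : ℝ × ℝ → ℝ) (hρ : ∀ z, ρ z = c₁ * z.1) :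
    ∀ t : ℝ, 0 < t → ∀ z : ℝ × ℝ,
      det2 (fun z => φ1 z t) (fun z => φ2 z t) z
        = -(z.2 * deriv (deriv f1) z.1 + deriv f2 z.1) := by
  intro t ht z
  have hf1' : ContDiff ℝ 1 (deriv f1) :=
    (contDiff_succ_iff_deriv.mp (by exact_mod_cast hf1 : ContDiff ℝ (1 + 1) f1)).2.2
  -- one-dimensional derivatives
  have h1 : HasDerivAt f1 (deriv f1 z.1) z.1 :=
    ((hf1.differentiable (by norm_num)) z.1).hasDerivAt
  have h1' : HasDerivAt (deriv f1) (deriv (deriv f1) z.1) z.1 :=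
    ((hf1'.differentiable (by norm_num)) z.1).hasDerivAt
  have h2 : HasDerivAt f2 (deriv f2 z.1) z.1 :=
    ((hf2.differentiable (by norm_num)) z.1).hasDerivAt
  -- promote to fderivs on ℝ × ℝ
  set fst : ℝ × ℝ →L[ℝ] ℝ := ContinuousLinearMap.fst ℝ ℝ ℝ
  set snd : ℝ × ℝ →L[ℝ] ℝ := ContinuousLinearMap.snd ℝ ℝ ℝ
  have hF1 : HasFDerivAt (fun z : ℝ × ℝ => f1 z.1) (deriv f1 z.1 • fst) z :=
    h1.comp_hasFDerivAt z (hasFDerivAt_fst)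
  have hF1' : HasFDerivAt (fun z : ℝ × ℝ => deriv f1 z.1)
      (deriv (deriv f1) z.1 • fst) z :=
    h1'.comp_hasFDerivAt z (hasFDerivAt_fst)
  have hF2 : HasFDerivAt (fun z : ℝ × ℝ => f2 z.1) (deriv f2 z.1 • fst) z :=
    h2.comp_hasFDerivAt z (hasFDerivAt_fst)
  have hsnd : HasFDerivAt (fun z : ℝ × ℝ => z.2) snd z := hasFDerivAt_snd
  -- φ1
  have hΦ1 : HasFDerivAt (fun z : ℝ × ℝ => φ1 z t)
      ((t ^ ((-1 : ℝ) / 3)) •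
        ((z.2 • (deriv (deriv f1) z.1 • fst) + (deriv f1 z.1) • snd)
          + deriv f2 z.1 • fst)
        + ((9 / 20) * c₁ * t ^ ((4 : ℝ) / 3)) • (deriv f1 z.1 • fst)) z := by
    have := (((hsnd.mul hF1').add hF2).const_mul (t ^ ((-1 : ℝ) / 3))).add
      (hF1.const_mul ((9 / 20) * c₁ * t ^ ((4 : ℝ) / 3)))
    refine HasFDerivAt.congr_of_eventuallyEq this ?_
    filter_upwards with w
    rw [hφ1]; rfl
  -- φ2
  have hΦ2 : HasFDerivAt (fun z : ℝ × ℝ => φ2 z t)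
      ((-(9 / 20) * c₁ * t ^ (2 : ℕ)) • fst - (t ^ ((1 : ℝ) / 3)) • snd) z := by
    have hf : HasFDerivAt (fun z : ℝ × ℝ => z.1) fst z := hasFDerivAt_fst
    have := (hf.const_mul (-(9 / 20) * c₁ * t ^ (2 : ℕ))).sub
      (hsnd.const_mul (t ^ ((1 : ℝ) / 3)))
    refine HasFDerivAt.congr_of_eventuallyEq this ?_
    filter_upwards with w
    rw [hφ2]; rfl
  -- evaluate
  have e1 := hΦ1.fderiv
  have e2 := hΦ2.fderiv
  simp only [det2, pd1, pd2, e1, e2]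
  simp only [ContinuousLinearMap.add_apply, ContinuousLinearMap.sub_apply,
    ContinuousLinearMap.smul_apply, fst, snd, ContinuousLinearMap.coe_fst',
    ContinuousLinearMap.coe_snd', smul_eq_mul]
  have ha : t ^ ((-1 : ℝ) / 3) * t ^ ((1 : ℝ) / 3) = 1 := by
    rw [← Real.rpow_add ht]; norm_num
  have hb : t ^ ((4 : ℝ) / 3) * t ^ ((1 : ℝ) / 3) = t ^ ((-1 : ℝ) / 3) * t ^ (2 : ℕ) := by
    rw [← Real.rpow_natCast t 2, ← Real.rpow_add ht, ← Real.rpow_add ht]; norm_num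
  linear_combination (-(z.2 * deriv (deriv f1) z.1 + deriv f2 z.1)) * ha - (9 / 20 * c₁ * deriv f1 z.1) * hb
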